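/- Let P be a real n×n orthogonal projection matrix, i.e., P = ZZᵀ for some real n×k matrix Z with ZᵀZ = I_k. Then for every real n×m matrix X and every natural number q ≥ 0, ‖PX‖₂ ≤ (‖P(XXᵀ)^q X‖₂)^{1/(2q+1)}; equivalently, ‖PX‖₂^{2q+1} ≤ ‖P(XXᵀ)^q X‖₂. -/

import Mathlib

open Matrix

/-- The Euclidean norm of a vector in `ℝ^n`. -/
noncomputable def euclNorm {n : ℕ} (x : Fin n → ℝ) : ℝ := Real.sqrt (∑ i, (x i) ^ 2)

/-- The spectral norm of a real matrix: `sup_{x ≠ 0} ‖Mx‖₂ / ‖x‖₂`. -/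
noncomputable def specNorm {m n : ℕ} (M : Matrix (Fin m) (Fin n) ℝ) : ℝ :=
  sSup ((fun x : Fin n → ℝ => euclNorm (M.mulVec x) / euclNorm x) '' {x | x ≠ 0})

open scoped Matrix.Norms.L2Operator

namespace Stmt15Aux

lemma euclNorm_eq {a : ℕ} (x : Fin a → ℝ) :
    euclNorm x = ‖(WithLp.equiv 2 (Fin a → ℝ)).symm x‖ := by
  rw [EuclideanSpace.norm_eq]
  simp [euclNorm, Real.norm_eq_abs, sq_abs]

lemma euclNorm_nonneg {a : ℕ} (x : Fin a → ℝ) : 0 ≤ euclNorm x := Real.sqrt_nonneg _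

lemma euclNorm_pos {a : ℕ} {x : Fin a → ℝ} (hx : x ≠ 0) : 0 < euclNorm x := by
  apply Real.sqrt_pos.2
  by_contra hle
  push_neg at hle
  have hz : ∑ i, x i ^ 2 = 0 := le_antisymm hle (by positivity)
  apply hx
  funext i
  have h0 := (Finset.sum_eq_zero_iff_of_nonneg
    (fun i _ => sq_nonneg (x i))).1 hz i (Finset.mem_univ i)
  exact pow_eq_zero_iff two_ne_zero |>.1 h0

lemma dot_self {a : ℕ} (x : Fin a → ℝ) : x ⬝ᵥ x = euclNorm x ^ 2 := by
  rw [euclNorm, Real.sq_sqrt (by positivity)]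
  simp [dotProduct, sq]

lemma dot_CS {a : ℕ} (u v : Fin a → ℝ) : (u ⬝ᵥ v) ^ 2 ≤ (u ⬝ᵥ u) * (v ⬝ᵥ v) := by
  simpa [dotProduct, sq] using Finset.sum_mul_sq_le_sq_mul_sq Finset.univ u v

lemma norm_mulVec_le {a b : ℕ} (M : Matrix (Fin a) (Fin b) ℝ) (x : Fin b → ℝ) :
    euclNorm (M *ᵥ x) ≤ ‖M‖ * euclNorm x := by
  rw [euclNorm_eq, euclNorm_eq]
  exact M.l2_opNorm_mulVec ((WithLp.equiv 2 (Fin b → ℝ)).symm x)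

lemma norm_le_of_bound {a b : ℕ} (M : Matrix (Fin a) (Fin b) ℝ) {c : ℝ} (hc : 0 ≤ c)
    (h : ∀ x, euclNorm (M *ᵥ x) ≤ c * euclNorm x) : ‖M‖ ≤ c := by
  rw [Matrix.l2_opNorm_def]
  apply ContinuousLinearMap.opNorm_le_bound _ hc
  intro x
  have := h ((WithLp.equiv 2 (Fin b → ℝ)) x)
  rw [euclNorm_eq, euclNorm_eq] at this
  simpa [Matrix.toEuclideanLin_apply] using this

lemma specNorm_eq {a b : ℕ} (M : Matrix (Fin a) (Fin b) ℝ) : specNorm M = ‖M‖ := by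
  have hub : ∀ y ∈ ((fun x : Fin b → ℝ => euclNorm (M.mulVec x) / euclNorm x) '' {x | x ≠ 0}),
      y ≤ ‖M‖ := by
    rintro y ⟨x, hx, rfl⟩
    have hxpos : 0 < euclNorm x := euclNorm_pos hx
    rw [div_le_iff₀ hxpos]
    exact norm_mulVec_le M x
  apply le_antisymm
  · exact Real.sSup_le hub (norm_nonneg _)
  · have hsn : 0 ≤ specNorm M := by
      apply Real.sSup_nonneg
      rintro y ⟨x, hx, rfl⟩
      exact div_nonneg (euclNorm_nonneg _) (euclNorm_nonneg _)
    apply norm_le_of_bound _ hsn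
    intro x
    by_cases hx : x = 0
    · subst hx
      simp only [Matrix.mulVec_zero]
      have h0 : euclNorm (0 : Fin a → ℝ) = 0 := by simp [euclNorm]
      rw [h0]
      exact mul_nonneg hsn (euclNorm_nonneg _)
    · have hxpos : 0 < euclNorm x := euclNorm_pos hx
      have hmem : euclNorm (M *ᵥ x) / euclNorm x ∈
          ((fun x : Fin b → ℝ => euclNorm (M.mulVec x) / euclNorm x) '' {x | x ≠ 0}) :=
        ⟨x, hx, rfl⟩
      have hle : euclNorm (M *ᵥ x) / euclNorm x ≤ specNorm M :=
        le_csSup ⟨‖M‖, hub⟩ hmem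
      calc euclNorm (M *ᵥ x) = euclNorm (M *ᵥ x) / euclNorm x * euclNorm x := by
            field_simp
        _ ≤ specNorm M * euclNorm x := mul_le_mul_of_nonneg_right hle (le_of_lt hxpos)

lemma l2norm_transpose {a b : ℕ} (M : Matrix (Fin a) (Fin b) ℝ) : ‖Mᵀ‖ = ‖M‖ := by
  rw [← Matrix.conjTranspose_eq_transpose_of_trivial]
  exact Matrix.l2_opNorm_conjTranspose M

lemma norm_mul_transpose {a b : ℕ} (M : Matrix (Fin a) (Fin b) ℝ) :
    ‖M * Mᵀ‖ = ‖M‖ ^ 2 := by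
  have h := Matrix.l2_opNorm_conjTranspose_mul_self Mᵀ
  rw [Matrix.conjTranspose_eq_transpose_of_trivial, Matrix.transpose_transpose] at h
  rw [h, l2norm_transpose, sq]

lemma dotmv {a b : ℕ} (M : Matrix (Fin a) (Fin b) ℝ) (u : Fin a → ℝ) (w : Fin b → ℝ) :
    u ⬝ᵥ (M *ᵥ w) = (Mᵀ *ᵥ u) ⬝ᵥ w := by
  rw [Matrix.dotProduct_mulVec, Matrix.mulVec_transpose]

section Moments

variable {a b : ℕ} (X : Matrix (Fin a) (Fin b) ℝ) (z : Fin a → ℝ)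

lemma pow_symm (i : ℕ) : ((X * Xᵀ) ^ i)ᵀ = (X * Xᵀ) ^ i := by
  rw [Matrix.transpose_pow, Matrix.transpose_mul, Matrix.transpose_transpose]

lemma moment_even (i j : ℕ) :
    z ⬝ᵥ ((X * Xᵀ) ^ (i + j) *ᵥ z) = ((X * Xᵀ) ^ i *ᵥ z) ⬝ᵥ ((X * Xᵀ) ^ j *ᵥ z) := by
  rw [pow_add, ← Matrix.mulVec_mulVec, dotmv, pow_symm]

lemma moment_odd (i j : ℕ) :
    z ⬝ᵥ ((X * Xᵀ) ^ (i + j + 1) *ᵥ z)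
      = (Xᵀ *ᵥ ((X * Xᵀ) ^ i *ᵥ z)) ⬝ᵥ (Xᵀ *ᵥ ((X * Xᵀ) ^ j *ᵥ z)) := by
  have h : i + j + 1 = i + (j + 1) := by omega
  rw [h, moment_even, pow_succ',
    ← Matrix.mulVec_mulVec z (X * Xᵀ) ((X * Xᵀ) ^ j),
    ← Matrix.mulVec_mulVec ((X * Xᵀ) ^ j *ᵥ z) X Xᵀ, dotmv]

lemma moment_nonneg (k : ℕ) : 0 ≤ z ⬝ᵥ ((X * Xᵀ) ^ k *ᵥ z) := by
  rcases Nat.even_or_odd k with ⟨i, hi⟩ | ⟨i, hi⟩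
  · rw [hi, moment_even, dot_self]; positivity
  · rw [hi, show 2 * i + 1 = i + i + 1 from by omega, moment_odd, dot_self]; positivity

lemma moment_logcvx (k : ℕ) :
    (z ⬝ᵥ ((X * Xᵀ) ^ (k + 1) *ᵥ z)) ^ 2
      ≤ (z ⬝ᵥ ((X * Xᵀ) ^ k *ᵥ z)) * (z ⬝ᵥ ((X * Xᵀ) ^ (k + 2) *ᵥ z)) := by
  rcases Nat.even_or_odd k with ⟨i, hi⟩ | ⟨i, hi⟩
  · have e1 := moment_even X z i (i + 1)
    have e0 := moment_even X z i i
    have e2 := moment_even X z (i + 1) (i + 1)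
    rw [show i + (i + 1) = k + 1 from by omega] at e1
    rw [show i + i = k from by omega] at e0
    rw [show i + 1 + (i + 1) = k + 2 from by omega] at e2
    rw [e1, e0, e2]
    exact dot_CS _ _
  · have e1 := moment_odd X z i (i + 1)
    have e0 := moment_odd X z i i
    have e2 := moment_odd X z (i + 1) (i + 1)
    rw [show i + (i + 1) + 1 = k + 1 from by omega] at e1
    rw [show i + i + 1 = k from by omega] at e0
    rw [show i + 1 + (i + 1) + 1 = k + 2 from by omega] at e2
    rw [e1, e0, e2]
    exact dot_CS _ _

lemma moment_chain (k : ℕ) :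
    (z ⬝ᵥ ((X * Xᵀ) ^ k *ᵥ z)) * (z ⬝ᵥ ((X * Xᵀ) ^ 1 *ᵥ z))
      ≤ (z ⬝ᵥ ((X * Xᵀ) ^ (k + 1) *ᵥ z)) * (z ⬝ᵥ ((X * Xᵀ) ^ 0 *ᵥ z)) := by
  induction k with
  | zero => rw [mul_comm]
  | succ k ih =>
      rcases eq_or_lt_of_le (moment_nonneg X z (k + 1)) with h0 | hpos
      · rw [← h0, zero_mul]
        exact mul_nonneg (moment_nonneg X z (k + 2)) (moment_nonneg X z 0)
      · have hcvx := moment_logcvx X z k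
        have h1 := mul_le_mul_of_nonneg_right hcvx (moment_nonneg X z 1)
        have h2 := mul_le_mul_of_nonneg_right ih (moment_nonneg X z (k + 2))
        nlinarith [moment_nonneg X z 0, moment_nonneg X z 1, moment_nonneg X z (k + 2),
          moment_nonneg X z k]

lemma moment_power (s : ℕ) :
    (z ⬝ᵥ ((X * Xᵀ) ^ 1 *ᵥ z)) ^ (s + 1)
      ≤ (z ⬝ᵥ ((X * Xᵀ) ^ (s + 1) *ᵥ z)) * (z ⬝ᵥ ((X * Xᵀ) ^ 0 *ᵥ z)) ^ s := by
  induction s with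
  | zero => simp
  | succ s ih =>
      calc (z ⬝ᵥ ((X * Xᵀ) ^ 1 *ᵥ z)) ^ (s + 2)
          = (z ⬝ᵥ ((X * Xᵀ) ^ 1 *ᵥ z)) ^ (s + 1) * (z ⬝ᵥ ((X * Xᵀ) ^ 1 *ᵥ z)) := by ring
        _ ≤ ((z ⬝ᵥ ((X * Xᵀ) ^ (s + 1) *ᵥ z)) * (z ⬝ᵥ ((X * Xᵀ) ^ 0 *ᵥ z)) ^ s)
              * (z ⬝ᵥ ((X * Xᵀ) ^ 1 *ᵥ z)) :=
            mul_le_mul_of_nonneg_right ih (moment_nonneg X z 1)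
        _ = ((z ⬝ᵥ ((X * Xᵀ) ^ (s + 1) *ᵥ z)) * (z ⬝ᵥ ((X * Xᵀ) ^ 1 *ᵥ z)))
              * (z ⬝ᵥ ((X * Xᵀ) ^ 0 *ᵥ z)) ^ s := by ring
        _ ≤ ((z ⬝ᵥ ((X * Xᵀ) ^ (s + 2) *ᵥ z)) * (z ⬝ᵥ ((X * Xᵀ) ^ 0 *ᵥ z)))
              * (z ⬝ᵥ ((X * Xᵀ) ^ 0 *ᵥ z)) ^ s :=
            mul_le_mul_of_nonneg_right (moment_chain X z (s + 1))
              (pow_nonneg (moment_nonneg X z 0) s)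
        _ = (z ⬝ᵥ ((X * Xᵀ) ^ (s + 2) *ᵥ z)) * (z ⬝ᵥ ((X * Xᵀ) ^ 0 *ᵥ z)) ^ (s + 1) := by
            ring

end Moments

lemma norm_mulmt_le {a b : ℕ} (M : Matrix (Fin a) (Fin b) ℝ) {c : ℝ} (hc : 0 ≤ c)
    (h : ∀ y, y ⬝ᵥ ((M * Mᵀ) *ᵥ y) ≤ c * euclNorm y ^ 2) : ‖M * Mᵀ‖ ≤ c := by
  have cross : ∀ u v : Fin a → ℝ, u ⬝ᵥ ((M * Mᵀ) *ᵥ v) = (Mᵀ *ᵥ u) ⬝ᵥ (Mᵀ *ᵥ v) := by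
    intro u v
    rw [← Matrix.mulVec_mulVec v M Mᵀ, dotmv]
  apply norm_le_of_bound _ hc
  intro x
  have hb2 : euclNorm ((M * Mᵀ) *ᵥ x) ^ 2
      = (Mᵀ *ᵥ ((M * Mᵀ) *ᵥ x)) ⬝ᵥ (Mᵀ *ᵥ x) := by
    rw [← dot_self]
    exact cross ((M * Mᵀ) *ᵥ x) x
  have hu : (Mᵀ *ᵥ x) ⬝ᵥ (Mᵀ *ᵥ x) ≤ c * euclNorm x ^ 2 := by
    rw [← cross x x]; exact h x
  have hv : (Mᵀ *ᵥ ((M * Mᵀ) *ᵥ x)) ⬝ᵥ (Mᵀ *ᵥ ((M * Mᵀ) *ᵥ x))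
      ≤ c * euclNorm ((M * Mᵀ) *ᵥ x) ^ 2 := by
    rw [← cross ((M * Mᵀ) *ᵥ x) ((M * Mᵀ) *ᵥ x)]; exact h _
  have hkey : euclNorm ((M * Mᵀ) *ᵥ x) ^ 4
      ≤ (c * euclNorm ((M * Mᵀ) *ᵥ x) ^ 2) * (c * euclNorm x ^ 2) := by
    calc euclNorm ((M * Mᵀ) *ᵥ x) ^ 4
        = ((Mᵀ *ᵥ ((M * Mᵀ) *ᵥ x)) ⬝ᵥ (Mᵀ *ᵥ x)) ^ 2 := by rw [← hb2]; ring
      _ ≤ ((Mᵀ *ᵥ ((M * Mᵀ) *ᵥ x)) ⬝ᵥ (Mᵀ *ᵥ ((M * Mᵀ) *ᵥ x)))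
            * ((Mᵀ *ᵥ x) ⬝ᵥ (Mᵀ *ᵥ x)) := dot_CS _ _
      _ ≤ (c * euclNorm ((M * Mᵀ) *ᵥ x) ^ 2) * (c * euclNorm x ^ 2) := by
          apply mul_le_mul hv hu _ (by positivity)
          rw [dot_self]
          positivity
  rcases eq_or_lt_of_le (euclNorm_nonneg ((M * Mᵀ) *ᵥ x)) with h0 | hbpos
  · rw [← h0]
    exact mul_nonneg hc (euclNorm_nonneg x)
  · have hsq : euclNorm ((M * Mᵀ) *ᵥ x) ^ 2 ≤ (c * euclNorm x) ^ 2 := by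
      nlinarith [euclNorm_nonneg x, hc]
    exact (pow_le_pow_iff_left₀ (euclNorm_nonneg _)
      (mul_nonneg hc (euclNorm_nonneg x)) two_ne_zero).1 hsq

lemma norm_one_le {a : ℕ} : ‖(1 : Matrix (Fin a) (Fin a) ℝ)‖ ≤ 1 := by
  apply norm_le_of_bound _ zero_le_one
  intro x
  rw [Matrix.one_mulVec, one_mul]

end Stmt15Aux

open Stmt15Aux in
/-- for an orthogonal projection `P = Z Zᵀ`,
`‖P X‖₂^{2q+1} ≤ ‖P (X Xᵀ)^q X‖₂`. -/
theorem stmt15 {n k m : ℕ} (Z : Matrix (Fin n) (Fin k) ℝ) (hZ : Zᵀ * Z = 1)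
    (X : Matrix (Fin n) (Fin m) ℝ) (q : ℕ) :
    specNorm (Z * Zᵀ * X) ^ (2 * q + 1) ≤ specNorm (Z * Zᵀ * (X * Xᵀ) ^ q * X) := by
  set P := Z * Zᵀ with hP
  have hPt : Pᵀ = P := by rw [hP, Matrix.transpose_mul, Matrix.transpose_transpose]
  have hPnorm : ‖P‖ ≤ 1 := by
    rw [hP, norm_mul_transpose]
    have h1 : ‖Z‖ ^ 2 = ‖Zᵀ * Z‖ := by
      rw [← Matrix.conjTranspose_eq_transpose_of_trivial,
        Matrix.l2_opNorm_conjTranspose_mul_self, sq]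
    rw [h1, hZ]
    exact norm_one_le
  set B := P * (X * Xᵀ) ^ q * X with hB
  rw [specNorm_eq, specNorm_eq]
  set c : ℝ := (‖B‖ ^ 2) ^ (((2 * q + 1 : ℕ) : ℝ))⁻¹ with hc
  have hcnn : 0 ≤ c := Real.rpow_nonneg (by positivity) _
  have hcpow : c ^ (2 * q + 1) = ‖B‖ ^ 2 :=
    Real.rpow_inv_natCast_pow (by positivity) (by omega)
  have hBt : Bᵀ = Xᵀ * (X * Xᵀ) ^ q * P := by
    rw [hB, Matrix.transpose_mul, Matrix.transpose_mul, pow_symm, hPt, Matrix.mul_assoc]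
  have hquad : ∀ y, y ⬝ᵥ (((P * X) * (P * X)ᵀ) *ᵥ y) ≤ c * euclNorm y ^ 2 := by
    intro y
    set z : Fin n → ℝ := P *ᵥ y with hz
    have hS : (P * X) * (P * X)ᵀ = P * (X * Xᵀ * P) := by
      rw [Matrix.transpose_mul, hPt]
      simp only [Matrix.mul_assoc]
    have hm1 : y ⬝ᵥ (((P * X) * (P * X)ᵀ) *ᵥ y) = z ⬝ᵥ ((X * Xᵀ) ^ 1 *ᵥ z) := by
      rw [pow_one, hS, ← Matrix.mulVec_mulVec y P (X * Xᵀ * P), dotmv P y, hPt,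
        ← Matrix.mulVec_mulVec y (X * Xᵀ) P, ← hz]
    have hm0 : z ⬝ᵥ ((X * Xᵀ) ^ 0 *ᵥ z) ≤ euclNorm y ^ 2 := by
      rw [pow_zero, Matrix.one_mulVec, dot_self]
      have h2 : euclNorm z ≤ euclNorm y := by
        calc euclNorm z ≤ ‖P‖ * euclNorm y := norm_mulVec_le P y
          _ ≤ 1 * euclNorm y := mul_le_mul_of_nonneg_right hPnorm (euclNorm_nonneg y)
          _ = euclNorm y := one_mul _
      exact pow_le_pow_left₀ (euclNorm_nonneg z) h2 2
    have hms : z ⬝ᵥ ((X * Xᵀ) ^ (2 * q + 1) *ᵥ z) ≤ ‖B‖ ^ 2 * euclNorm y ^ 2 := by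
      have he := moment_odd X z q q
      rw [show q + q + 1 = 2 * q + 1 from by omega] at he
      have hw : Xᵀ *ᵥ ((X * Xᵀ) ^ q *ᵥ z) = Bᵀ *ᵥ y := by
        rw [hBt, ← Matrix.mulVec_mulVec y (Xᵀ * (X * Xᵀ) ^ q) P,
          ← Matrix.mulVec_mulVec (P *ᵥ y) Xᵀ ((X * Xᵀ) ^ q), ← hz]
      rw [he, hw, dot_self]
      have h1 : euclNorm (Bᵀ *ᵥ y) ≤ ‖Bᵀ‖ * euclNorm y := norm_mulVec_le Bᵀ y
      calc euclNorm (Bᵀ *ᵥ y) ^ 2 ≤ (‖Bᵀ‖ * euclNorm y) ^ 2 :=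
            pow_le_pow_left₀ (euclNorm_nonneg _) h1 2
        _ = ‖B‖ ^ 2 * euclNorm y ^ 2 := by rw [mul_pow, l2norm_transpose]
    have hpow := moment_power X z (2 * q)
    have hfinal : (z ⬝ᵥ ((X * Xᵀ) ^ 1 *ᵥ z)) ^ (2 * q + 1)
        ≤ (c * euclNorm y ^ 2) ^ (2 * q + 1) := by
      calc (z ⬝ᵥ ((X * Xᵀ) ^ 1 *ᵥ z)) ^ (2 * q + 1)
          ≤ (z ⬝ᵥ ((X * Xᵀ) ^ (2 * q + 1) *ᵥ z)) * (z ⬝ᵥ ((X * Xᵀ) ^ 0 *ᵥ z)) ^ (2 * q) :=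
            hpow
        _ ≤ (‖B‖ ^ 2 * euclNorm y ^ 2) * (euclNorm y ^ 2) ^ (2 * q) :=
            mul_le_mul hms
              (pow_le_pow_left₀ (moment_nonneg X z 0) hm0 _)
              (pow_nonneg (moment_nonneg X z 0) _) (by positivity)
        _ = (c * euclNorm y ^ 2) ^ (2 * q + 1) := by
            rw [mul_pow, hcpow]; ring
    rw [hm1]
    exact (pow_le_pow_iff_left₀ (moment_nonneg X z 1)
      (by positivity) (by omega)).1 hfinal
  have hSbound : ‖(P * X) * (P * X)ᵀ‖ ≤ c := norm_mulmt_le (P * X) hcnn hquad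
  have hsq : (‖P * X‖ ^ (2 * q + 1)) ^ 2 ≤ ‖B‖ ^ 2 := by
    calc (‖P * X‖ ^ (2 * q + 1)) ^ 2 = (‖P * X‖ ^ 2) ^ (2 * q + 1) := by ring
      _ = ‖(P * X) * (P * X)ᵀ‖ ^ (2 * q + 1) := by rw [norm_mul_transpose]
      _ ≤ c ^ (2 * q + 1) := pow_le_pow_left₀ (norm_nonneg _) hSbound _
      _ = ‖B‖ ^ 2 := hcpow
  exact (pow_le_pow_iff_left₀ (pow_nonneg (norm_nonneg _) _)
    (norm_nonneg B) two_ne_zero).1 hsq
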